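/- Among all proper binary trees T with ℓ ≥ 3 leaves, the maximum security equals max R(T) = 2ℓ − ⌊log₂ ℓ⌋ − s₂(ℓ) − 1, where s₂(ℓ) denotes the number of ones in the binary representation of ℓ (equivalently, writing ℓ = 2^{n_1} + ⋯ + 2^{n_k} with n_1 > ⋯ > n_k ≥ 0, the maximum security equals 2ℓ − n_1 − k − 1). -/

import Mathlib

/-- Proper binary trees: every internal vertex has exactly two children. -/
inductive BTree : Type
  | leaf : BTree
  | node : BTree → BTree → BTree
  deriving DecidableEq

namespace BTree

/-- The rank (protection number) of the root of a proper binary tree: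
the minimum distance from the root to a leaf descendant. -/
def rank : BTree → ℕ
  | leaf => 0
  | node l r => min l.rank r.rank + 1

/-- The security of a proper binary tree: the sum of the ranks of all vertices. -/
def security : BTree → ℕ
  | leaf => 0
  | node l r => (node l r).rank + l.security + r.security

/-- The number of leaves. -/
def leafCount : BTree → ℕ
  | leaf => 1
  | node l r => l.leafCount + r.leafCount

/-- The height: maximum distance from the root to a leaf. -/
def height : BTree → ℕ
  | leaf => 0
  | node l r => max l.height r.height + 1

/-- A tree is complete if all leaves are at the same depth. -/
def IsComplete : BTree → Prop
  | leaf => True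
  | node l r => IsComplete l ∧ IsComplete r ∧ l.height = r.height

/-- The subtree at a given position (a list of directions from the root;
`false` = first child, `true` = second child), if the position exists. -/
def subtreeAt : BTree → List Bool → Option BTree
  | t, [] => some t
  | leaf, _ :: _ => none
  | node l _, false :: p => subtreeAt l p
  | node _ r, true :: p => subtreeAt r p

/-- Replace the subtree at a given position by `s`. -/
def replaceAt : BTree → List Bool → BTree → BTree
  | _, [], s => s
  | leaf, _ :: _, _ => leaf
  | node l r, false :: p, s => node (replaceAt l p s) r
  | node l r, true :: p, s => node l (replaceAt r p s)

/-- The rank of the vertex at position `p` in `T` (rank of a vertex only depends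
on the subtree consisting of the vertex and its descendants). -/
def rankAt (T : BTree) (p : List Bool) : ℕ := ((T.subtreeAt p).map rank).getD 0

/-- The vertex at position `p` in `T` is saturated: its subtree is complete, but the
subtree of none of its (proper) ancestors is complete. -/
def Saturated (T : BTree) (p : List Bool) : Prop :=
  (∃ s, T.subtreeAt p = some s ∧ IsComplete s) ∧
  ∀ q s, q <+: p → q ≠ p → T.subtreeAt q = some s → ¬ IsComplete s

/-- The complete binary tree of height `m` (with `2 ^ m` leaves). -/
def completeTree : ℕ → BTree
  | 0 => leaf
  | m + 1 => node (completeTree m) (completeTree m)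

/-- The tree `T_L` for `L = (n₁, …, n_k)`: a binary caterpillar whose spine vertices carry
complete binary trees with `2 ^ nᵢ` leaves. -/
def TL : List ℕ → BTree
  | [] => leaf
  | n :: ns => ns.foldl (fun acc m => node acc (completeTree m)) (completeTree n)

/-- Helper for the almost complete tree: a complete binary tree of height `m`
whose leftmost `r` leaves each receive two leaf children. -/
def buildF : ℕ → ℕ → BTree
  | 0, r => if r = 0 then leaf else node leaf leaf
  | m + 1, r => node (buildF m (min r (2 ^ m))) (buildF m (r - 2 ^ m))

/-- The almost complete ("good") tree `F(ℓ)` on `ℓ` leaves. -/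
def F (ℓ : ℕ) : BTree := buildF (Nat.log 2 ℓ) (ℓ - 2 ^ Nat.log 2 ℓ)

end BTree

namespace BTree

/-- binary digit sum -/
def s2 (n : ℕ) : ℕ := (Nat.digits 2 n).sum

lemma s2_zero : s2 0 = 0 := by simp [s2]

lemma s2_two_mul (n : ℕ) : s2 (2 * n) = s2 n := by
  rcases Nat.eq_zero_or_pos n with h | h
  · simp [h, s2]
  · unfold s2
    rw [Nat.digits_def' (by norm_num : 1 < 2) (by omega)]
    have h1 : 2 * n % 2 = 0 := by omega
    have h2 : 2 * n / 2 = n := by omega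
    rw [h1, h2]
    simp

lemma s2_odd (n : ℕ) : s2 (2 * n + 1) = s2 n + 1 := by
  unfold s2
  rw [Nat.digits_def' (by norm_num : 1 < 2) (by omega)]
  have h1 : (2 * n + 1) % 2 = 1 := by omega
  have h2 : (2 * n + 1) / 2 = n := by omega
  rw [h1, h2]
  simp [Nat.add_comm]

lemma s2_one : s2 1 = 1 := by
  have := s2_odd 0; simpa [s2_zero] using this

lemma s2_succ_le (n : ℕ) : s2 (n + 1) ≤ s2 n + 1 := by
  induction n using Nat.strong_induction_on with
  | _ n ih =>
    rcases Nat.even_or_odd n with ⟨m, hm⟩ | ⟨m, hm⟩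
    · have h : n = 2 * m := by omega
      rw [h, s2_odd, s2_two_mul]
    · have h : n = 2 * m + 1 := by omega
      have h2 : n + 1 = 2 * (m + 1) := by omega
      rw [h2, s2_two_mul, h, s2_odd]
      have := ih m (by omega)
      omega

lemma s2_pow (m : ℕ) : s2 (2 ^ m) = 1 := by
  induction m with
  | zero => simpa using s2_one
  | succ m ih => rw [pow_succ, mul_comm, s2_two_mul]; exact ih

lemma s2_pow_add : ∀ m r, r < 2 ^ m → s2 (2 ^ m + r) = s2 r + 1 := by
  intro m
  induction m with
  | zero =>
    intro r h
    have : r = 0 := by simpa using h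
    subst this
    simp [s2_zero, s2_one]
  | succ m ih =>
    intro r h
    have hp : (2:ℕ) ^ (m+1) = 2 * 2 ^ m := by ring
    rcases Nat.even_or_odd r with ⟨r', hr'⟩ | ⟨r', hr'⟩
    · have e : 2 ^ (m+1) + r = 2 * (2 ^ m + r') := by omega
      have e2 : r = 2 * r' := by omega
      rw [e, s2_two_mul, ih r' (by omega), e2, s2_two_mul]
    · have e : 2 ^ (m+1) + r = 2 * (2 ^ m + r') + 1 := by omega
      rw [e, s2_odd, ih r' (by omega), hr', s2_odd]

lemma log2_two_mul {n : ℕ} (hn : 1 ≤ n) : Nat.log 2 (2 * n) = Nat.log 2 n + 1 := by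
  have h1 : 2 ^ Nat.log 2 n ≤ n := Nat.pow_log_le_self 2 (by omega)
  have h2 : n < 2 ^ (Nat.log 2 n + 1) := Nat.lt_pow_succ_log_self one_lt_two n
  apply Nat.log_eq_of_pow_le_of_lt_pow
  · rw [pow_succ]; omega
  · rw [pow_succ, pow_succ]; rw [pow_succ] at h2; omega

lemma log2_two_mul_add_one {n : ℕ} (hn : 1 ≤ n) :
    Nat.log 2 (2 * n + 1) = Nat.log 2 n + 1 := by
  have h1 : 2 ^ Nat.log 2 n ≤ n := Nat.pow_log_le_self 2 (by omega)
  have h2 : n < 2 ^ (Nat.log 2 n + 1) := Nat.lt_pow_succ_log_self one_lt_two n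
  apply Nat.log_eq_of_pow_le_of_lt_pow
  · rw [pow_succ]; omega
  · rw [pow_succ, pow_succ]; rw [pow_succ] at h2; omega

lemma key : ∀ n a b, a + b = n → 1 ≤ a → 1 ≤ b →
    Nat.log 2 (a + b) + s2 (a + b) ≤ max (Nat.log 2 a) (Nat.log 2 b) + s2 a + s2 b := by
  intro n
  induction n using Nat.strong_induction_on with
  | _ n ih =>
  intro a b hab ha hb
  rcases Nat.even_or_odd a with ⟨a', ha'⟩ | ⟨a', ha'⟩ <;>
    rcases Nat.even_or_odd b with ⟨b', hb'⟩ | ⟨b', hb'⟩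
  · -- a = 2a', b = 2b'
    have ea : a = 2 * a' := by omega
    have eb : b = 2 * b' := by omega
    have e : a + b = 2 * (a' + b') := by omega
    rw [e, s2_two_mul, log2_two_mul (by omega), ea, eb, s2_two_mul, s2_two_mul,
      log2_two_mul (by omega), log2_two_mul (by omega)]
    have := ih (a' + b') (by omega) a' b' rfl (by omega) (by omega)
    omega
  · -- a = 2a', b = 2b'+1
    have ea : a = 2 * a' := by omega
    have eb : b = 2 * b' + 1 := by omega
    have e : a + b = 2 * (a' + b') + 1 := by omega
    rw [e, s2_odd, log2_two_mul_add_one (by omega), ea, eb, s2_two_mul, s2_odd,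
      log2_two_mul (by omega)]
    rcases Nat.eq_zero_or_pos b' with h0 | h0
    · subst h0
      have hL : Nat.log 2 (2 * 0 + 1) = 0 := by norm_num
      have h1 : s2 0 = 0 := s2_zero
      simp only [Nat.add_zero] at *
      rw [hL]
      omega
    · rw [log2_two_mul_add_one h0]
      have := ih (a' + b') (by omega) a' b' rfl (by omega) (by omega)
      omega
  · -- a = 2a'+1, b = 2b'
    have ea : a = 2 * a' + 1 := by omega
    have eb : b = 2 * b' := by omega
    have e : a + b = 2 * (a' + b') + 1 := by omega
    rw [e, s2_odd, log2_two_mul_add_one (by omega), ea, eb, s2_two_mul, s2_odd,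
      log2_two_mul (by omega)]
    rcases Nat.eq_zero_or_pos a' with h0 | h0
    · subst h0
      have hL : Nat.log 2 (2 * 0 + 1) = 0 := by norm_num
      have h1 : s2 0 = 0 := s2_zero
      simp only [Nat.zero_add] at *
      rw [hL]
      omega
    · rw [log2_two_mul_add_one h0]
      have := ih (a' + b') (by omega) a' b' rfl (by omega) (by omega)
      omega
  · -- a = 2a'+1, b = 2b'+1
    have ea : a = 2 * a' + 1 := by omega
    have eb : b = 2 * b' + 1 := by omega
    have e : a + b = 2 * (a' + b' + 1) := by omega
    rw [e, s2_two_mul, log2_two_mul (by omega), ea, eb, s2_odd, s2_odd]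
    rcases Nat.eq_zero_or_pos b' with hb0 | hb0
    · rcases Nat.eq_zero_or_pos a' with ha0 | ha0
      · -- a = b = 1
        subst ha0; subst hb0
        have hL : Nat.log 2 (2 * 0 + 1) = 0 := by norm_num
        have hL1 : Nat.log 2 (0 + 0 + 1) = 0 := by norm_num
        have h1 : s2 (0 + 0 + 1) = 1 := by norm_num [s2_one]
        have h2 : s2 0 = 0 := s2_zero
        rw [hL, h1]
        omega
      · -- b = 1, a = 2a'+1, a' ≥ 1
        subst hb0
        have e2 : a' + 0 + 1 = a' + 1 := by omega
        rw [e2]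
        have hL : Nat.log 2 (2 * 0 + 1) = 0 := by norm_num
        rw [hL]
        have h1 : s2 (a' + 1) ≤ s2 a' + 1 := s2_succ_le a'
        have h2 : Nat.log 2 (a' + 1) ≤ Nat.log 2 (2 * a' + 1) :=
          Nat.log_mono_right (by omega)
        have h3 : s2 0 = 0 := s2_zero
        omega
    · have := ih (a' + 1 + b') (by omega) (a' + 1) b' rfl (by omega) hb0
      have h1 : s2 (a' + 1) ≤ s2 a' + 1 := s2_succ_le a'
      have h2 : Nat.log 2 (a' + 1) ≤ Nat.log 2 (2 * a' + 1) :=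
        Nat.log_mono_right (by omega)
      have h3 : Nat.log 2 b' ≤ Nat.log 2 (2 * b' + 1) := Nat.log_mono_right (by omega)
      have e2 : a' + 1 + b' = a' + b' + 1 := by omega
      rw [e2] at this
      omega

lemma leafCount_pos (T : BTree) : 1 ≤ T.leafCount := by
  induction T with
  | leaf => simp [leafCount]
  | node l r ihl ihr => simp only [leafCount]; omega

lemma pow_rank_le (T : BTree) : 2 ^ T.rank ≤ T.leafCount := by
  induction T with
  | leaf => simp [rank, leafCount]
  | node l r ihl ihr =>
    simp only [rank, leafCount, pow_succ]
    have h1 : 2 ^ min l.rank r.rank ≤ 2 ^ l.rank :=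
      Nat.pow_le_pow_right (by norm_num) (min_le_left _ _)
    have h2 : 2 ^ min l.rank r.rank ≤ 2 ^ r.rank :=
      Nat.pow_le_pow_right (by norm_num) (min_le_right _ _)
    omega

lemma rank_le_log (T : BTree) : T.rank ≤ Nat.log 2 T.leafCount := by
  have h1 := pow_rank_le T
  have h2 := leafCount_pos T
  exact (Nat.le_log_iff_pow_le one_lt_two (by omega)).mpr h1

lemma security_bound (T : BTree) :
    T.security + Nat.log 2 T.leafCount + s2 T.leafCount + 1 ≤ 2 * T.leafCount := by
  induction T with
  | leaf =>
    simp [security, leafCount, s2_one, Nat.log_one_right]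
  | node l r ihl ihr =>
    have ha := leafCount_pos l
    have hb := leafCount_pos r
    have hkey := key (l.leafCount + r.leafCount) l.leafCount r.leafCount rfl ha hb
    have h1 := rank_le_log l
    have h2 := rank_le_log r
    simp only [security, rank, leafCount] at *
    omega

lemma leafCount_buildF : ∀ m r, r ≤ 2 ^ m → (buildF m r).leafCount = 2 ^ m + r := by
  intro m
  induction m with
  | zero =>
    intro r h
    interval_cases r <;> simp [buildF, leafCount]
  | succ m ih =>
    intro r h
    have hp : (2:ℕ) ^ (m+1) = 2 * 2 ^ m := by ring
    simp only [buildF, leafCount]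
    rw [ih (min r (2 ^ m)) (min_le_right _ _), ih (r - 2 ^ m) (by omega)]
    omega

lemma rank_buildF : ∀ m r, r ≤ 2 ^ m →
    (buildF m r).rank = if r = 2 ^ m then m + 1 else m := by
  intro m
  induction m with
  | zero =>
    intro r h
    interval_cases r <;> simp [buildF, rank]
  | succ m ih =>
    intro r h
    have hp : (2:ℕ) ^ (m+1) = 2 * 2 ^ m := by ring
    have h2m : (1:ℕ) ≤ 2 ^ m := Nat.one_le_two_pow
    simp only [buildF, rank]
    rw [ih (min r (2 ^ m)) (min_le_right _ _), ih (r - 2 ^ m) (by omega)]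
    split_ifs <;> omega

lemma security_buildF : ∀ m r, r ≤ 2 ^ m →
    (buildF m r).security + m + s2 r + 2 = 2 ^ (m + 1) + 2 * r := by
  intro m
  induction m with
  | zero =>
    intro r h
    interval_cases r <;> simp [buildF, security, rank, s2_zero, s2_one]
  | succ m ih =>
    intro r h
    have hp : (2:ℕ) ^ (m+1) = 2 * 2 ^ m := by ring
    have hp2 : (2:ℕ) ^ (m+2) = 2 * 2 ^ (m+1) := by ring
    have h2m : (1:ℕ) ≤ 2 ^ m := Nat.one_le_two_pow
    have hrank := rank_buildF (m+1) r h
    simp only [buildF] at hrank ⊢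
    simp only [security]
    rw [hrank]
    by_cases h1 : r ≤ 2 ^ m
    · have e1 : min r (2 ^ m) = r := min_eq_left h1
      have e2 : r - 2 ^ m = 0 := by omega
      rw [e1, e2]
      have i1 := ih r h1
      have i2 := ih 0 (by positivity)
      rw [if_neg (by omega)]
      have h0 : s2 0 = 0 := s2_zero
      omega
    · have e1 : min r (2 ^ m) = 2 ^ m := min_eq_right (by omega)
      rw [e1]
      have i1 := ih (2 ^ m) le_rfl
      have i2 := ih (r - 2 ^ m) (by omega)
      have hsp := s2_pow m
      by_cases h2 : r = 2 ^ (m+1)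
      · have e3 : r - 2 ^ m = 2 ^ m := by omega
        rw [if_pos h2, e3]
        rw [e3] at i2
        have hsr : s2 r = 1 := by rw [h2]; exact s2_pow (m+1)
        omega
      · rw [if_neg h2]
        have hsr : s2 r = s2 (r - 2 ^ m) + 1 := by
          have := s2_pow_add m (r - 2 ^ m) (by omega)
          rw [show 2 ^ m + (r - 2 ^ m) = r by omega] at this
          exact this
        omega

end BTree

open BTree in
/-- Among proper binary trees with `ℓ ≥ 3` leaves, the maximum security equals
`2ℓ − ⌊log₂ ℓ⌋ − s₂(ℓ) − 1`, where `s₂(ℓ)` is the number of ones in the binary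
representation of `ℓ`. -/
theorem max_security (ℓ : ℕ) (hℓ : 3 ≤ ℓ) :
    IsGreatest {R : ℕ | ∃ T : BTree, T.leafCount = ℓ ∧ T.security = R}
      (2 * ℓ - Nat.log 2 ℓ - (Nat.digits 2 ℓ).sum - 1) := by
  have hd : (Nat.digits 2 ℓ).sum = s2 ℓ := rfl
  rw [hd]
  set m := Nat.log 2 ℓ with hm
  have hℓ0 : ℓ ≠ 0 := by omega
  have hpl : 2 ^ m ≤ ℓ := Nat.pow_log_le_self 2 hℓ0
  have hpu : ℓ < 2 ^ (m + 1) := Nat.lt_pow_succ_log_self one_lt_two ℓ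
  have hp : (2:ℕ) ^ (m + 1) = 2 * 2 ^ m := by ring
  have hrlt : ℓ - 2 ^ m < 2 ^ m := by omega
  have hs : s2 ℓ = s2 (ℓ - 2 ^ m) + 1 := by
    have := s2_pow_add m (ℓ - 2 ^ m) hrlt
    rw [show 2 ^ m + (ℓ - 2 ^ m) = ℓ by omega] at this
    exact this
  constructor
  · refine ⟨F ℓ, ?_, ?_⟩
    · show (buildF (Nat.log 2 ℓ) (ℓ - 2 ^ Nat.log 2 ℓ)).leafCount = ℓ
      rw [← hm, leafCount_buildF m (ℓ - 2 ^ m) (le_of_lt hrlt)]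
      omega
    · show (buildF (Nat.log 2 ℓ) (ℓ - 2 ^ Nat.log 2 ℓ)).security = 2 * ℓ - m - s2 ℓ - 1
      rw [← hm]
      have := security_buildF m (ℓ - 2 ^ m) (le_of_lt hrlt)
      omega
  · rintro R ⟨T, hT, rfl⟩
    have h := security_bound T
    rw [hT, ← hm] at h
    omega
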